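/- Let R₁ and R₂ be Hermitian trace-one operators on finite-dimensional complex Hilbert spaces, and let R₁ ⊗ R₂ denote their tensor (Kronecker) product. With S(R) = −Σ_i |λ_i| log|λ_i| over the eigenvalues λ_i of R, ‖R‖₁ the trace norm, and C(R) = (‖R‖₁ − 1)/2, one has the weak additivity S(R₁ ⊗ R₂) = (2C(R₂) + 1)·S(R₁) + (2C(R₁) + 1)·S(R₂), i.e. S(R₁ ⊗ R₂) = ‖R₂‖₁·S(R₁) + ‖R₁‖₁·S(R₂). -/

import Mathlib

open Matrix Polynomial
open scoped Kronecker

namespace SpacetimeAux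

variable {n : Type*} [Fintype n] [DecidableEq n]

lemma charpoly_conj_aux (U M V : Matrix n n ℂ) (hUV : U * V = 1) :
    (U * M * V).charpoly = M.charpoly := by
  have hscal : (Matrix.scalar n (X : ℂ[X])) = (X : ℂ[X]) • (1 : Matrix n n ℂ[X]) := by
    ext i j
    by_cases h : i = j <;> simp [Matrix.scalar_apply, Matrix.diagonal_apply, h,
      Matrix.one_apply]
  have key : charmatrix (U * M * V) =
      U.map (C : ℂ →+* ℂ[X]) * charmatrix M * V.map (C : ℂ →+* ℂ[X]) := by
    unfold charmatrix
    rw [RingHom.mapMatrix_apply, RingHom.mapMatrix_apply, Matrix.map_mul, Matrix.map_mul,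
      Matrix.mul_sub, Matrix.sub_mul]
    congr 1
    rw [hscal, Matrix.mul_smul, Matrix.smul_mul, Matrix.mul_one, ← Matrix.map_mul, hUV]
    simp
  have hdet : (U.map (C : ℂ →+* ℂ[X])).det * (V.map (C : ℂ →+* ℂ[X])).det = 1 := by
    rw [← Matrix.det_mul, ← Matrix.map_mul, hUV]
    simp
  unfold Matrix.charpoly
  rw [key, Matrix.det_mul, Matrix.det_mul]
  calc (U.map (C : ℂ →+* ℂ[X])).det * (charmatrix M).det * (V.map (C : ℂ →+* ℂ[X])).det
      = (U.map (C : ℂ →+* ℂ[X])).det * (V.map (C : ℂ →+* ℂ[X])).det * (charmatrix M).det := by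
        ring
    _ = (charmatrix M).det := by rw [hdet, one_mul]

lemma charpoly_diagonal (d : n → ℂ) :
    (Matrix.diagonal d).charpoly = ∏ i, (X - C (d i)) := by
  have : charmatrix (Matrix.diagonal d) = Matrix.diagonal fun i => (X : ℂ[X]) - C (d i) := by
    ext i j
    by_cases h : i = j
    · subst h; simp
    · simp [h, Matrix.diagonal_apply_ne _ h]
  rw [Matrix.charpoly, this, Matrix.det_diagonal]

lemma roots_charpoly_diagonal (d : n → ℂ) :
    (Matrix.diagonal d).charpoly.roots = Finset.univ.val.map d := by
  rw [charpoly_diagonal]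
  have : (∏ i, ((X : ℂ[X]) - C (d i))) =
      ((Finset.univ.val.map d).map fun a => (X : ℂ[X]) - C a).prod := by
    rw [Multiset.map_map]
    rfl
  rw [this, Polynomial.roots_multiset_prod_X_sub_C]

/-- The multiset of (complexified) eigenvalues of a Hermitian matrix equals the
roots of its characteristic polynomial. -/
lemma roots_charpoly_hermitian (A : Matrix n n ℂ) (hA : A.IsHermitian) :
    A.charpoly.roots =
      (Finset.univ.val.map hA.eigenvalues).map (fun x : ℝ => (x : ℂ)) := by
  set U : Matrix n n ℂ := ((Matrix.IsHermitian.eigenvectorUnitary hA : Matrix n n ℂ)) with hU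
  have hUV : U * star U = 1 :=
    Unitary.mul_star_self_of_mem (Matrix.IsHermitian.eigenvectorUnitary hA).prop
  have hsd := Matrix.IsHermitian.spectral_theorem hA
  have hcp : A.charpoly = (Matrix.diagonal (RCLike.ofReal ∘ hA.eigenvalues)).charpoly := by
    conv_lhs => rw [hsd]
    exact charpoly_conj_aux _ _ _ hUV
  rw [hcp, roots_charpoly_diagonal, Multiset.map_map]
  rfl

end SpacetimeAux

open SpacetimeAux

/-- The multiset of eigenvalues of a Kronecker product of Hermitian matrices is the
multiset of pairwise products of eigenvalues. -/
lemma kron_eigenvalues_multiset (n m : ℕ) (R₁ : Matrix (Fin n) (Fin n) ℂ)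
    (R₂ : Matrix (Fin m) (Fin m) ℂ) (h₁ : R₁.IsHermitian) (h₂ : R₂.IsHermitian)
    (h12 : (R₁ ⊗ₖ R₂).IsHermitian) :
    Finset.univ.val.map h12.eigenvalues =
      Finset.univ.val.map (fun p : Fin n × Fin m =>
        h₁.eigenvalues p.1 * h₂.eigenvalues p.2) := by
  set U₁ : Matrix (Fin n) (Fin n) ℂ :=
    ((Matrix.IsHermitian.eigenvectorUnitary h₁ : Matrix (Fin n) (Fin n) ℂ)) with hU₁
  set U₂ : Matrix (Fin m) (Fin m) ℂ :=
    ((Matrix.IsHermitian.eigenvectorUnitary h₂ : Matrix (Fin m) (Fin m) ℂ)) with hU₂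
  have hUV : (U₁ ⊗ₖ U₂) * (star U₁ ⊗ₖ star U₂) = 1 := by
    rw [← Matrix.mul_kronecker_mul,
      Unitary.mul_star_self_of_mem (Matrix.IsHermitian.eigenvectorUnitary h₁).prop,
      Unitary.mul_star_self_of_mem (Matrix.IsHermitian.eigenvectorUnitary h₂).prop,
      Matrix.one_kronecker_one]
  have hsd₁ := Matrix.IsHermitian.spectral_theorem h₁
  have hsd₂ := Matrix.IsHermitian.spectral_theorem h₂
  have hkron : R₁ ⊗ₖ R₂ =
      (U₁ ⊗ₖ U₂) * Matrix.diagonal (fun p : Fin n × Fin m =>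
        ((h₁.eigenvalues p.1 : ℂ) * (h₂.eigenvalues p.2 : ℂ))) * (star U₁ ⊗ₖ star U₂) := by
    conv_lhs => rw [hsd₁, hsd₂]
    simp only [Unitary.conjStarAlgAut_apply, Unitary.coe_star]
    rw [Matrix.mul_kronecker_mul, Matrix.mul_kronecker_mul,
      Matrix.diagonal_kronecker_diagonal]
    rfl
  have hroots := roots_charpoly_hermitian (R₁ ⊗ₖ R₂) h12
  have hroots' : (R₁ ⊗ₖ R₂).charpoly.roots =
      (Finset.univ.val.map (fun p : Fin n × Fin m =>
        h₁.eigenvalues p.1 * h₂.eigenvalues p.2)).map (fun x : ℝ => (x : ℂ)) := by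
    rw [hkron, charpoly_conj_aux _ _ _ hUV, roots_charpoly_diagonal, Multiset.map_map]
    congr 1
    funext p
    simp [Function.comp_apply, Complex.ofReal_mul]
  apply Multiset.map_injective (f := fun x : ℝ => (x : ℂ)) Complex.ofReal_injective
  rw [← hroots, hroots']

lemma abs_mul_log_abs_mul (x y : ℝ) :
    |x * y| * Real.log |x * y| =
      |x| * (|y| * Real.log |y|) + |y| * (|x| * Real.log |x|) := by
  rcases eq_or_ne x 0 with hx | hx
  · simp [hx]
  rcases eq_or_ne y 0 with hy | hy
  · simp [hy]
  rw [abs_mul, Real.log_mul (abs_ne_zero.mpr hx) (abs_ne_zero.mpr hy)]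
  ring

/-- weak additivity of space-time entropy: for Hermitian
trace-one `R₁`, `R₂`, with `S(R) = −Σ |λ_i| log|λ_i|`, `‖R‖₁ = Σ |λ_i|` and
`C(R) = (‖R‖₁ − 1)/2`, one has
`S(R₁ ⊗ R₂) = (2C(R₂)+1)·S(R₁) + (2C(R₁)+1)·S(R₂)`.
(The hypothesis `h12` records the — automatic — Hermiticity of `R₁ ⊗ R₂`.) -/
theorem spacetime_entropy_weak_additivity
    (n m : ℕ) (R₁ : Matrix (Fin n) (Fin n) ℂ) (R₂ : Matrix (Fin m) (Fin m) ℂ)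
    (h₁ : R₁.IsHermitian) (h₂ : R₂.IsHermitian)
    (hTr₁ : R₁.trace = 1) (hTr₂ : R₂.trace = 1)
    (h12 : (R₁ ⊗ₖ R₂).IsHermitian) :
    (-∑ i, |h12.eigenvalues i| * Real.log |h12.eigenvalues i|) =
      (2 * (((∑ j, |h₂.eigenvalues j|) - 1) / 2) + 1) *
          (-∑ i, |h₁.eigenvalues i| * Real.log |h₁.eigenvalues i|) +
        (2 * (((∑ i, |h₁.eigenvalues i|) - 1) / 2) + 1) *
          (-∑ j, |h₂.eigenvalues j| * Real.log |h₂.eigenvalues j|) := by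
  have hmult := kron_eigenvalues_multiset n m R₁ R₂ h₁ h₂ h12
  have hsum : (∑ i, |h12.eigenvalues i| * Real.log |h12.eigenvalues i|) =
      ∑ p : Fin n × Fin m,
        |h₁.eigenvalues p.1 * h₂.eigenvalues p.2| *
          Real.log |h₁.eigenvalues p.1 * h₂.eigenvalues p.2| := by
    have h1 : (∑ i, |h12.eigenvalues i| * Real.log |h12.eigenvalues i|) =
        ((Finset.univ.val.map h12.eigenvalues).map
          (fun x : ℝ => |x| * Real.log |x|)).sum := by
      rw [Multiset.map_map]
      rfl
    have h2 : (∑ p : Fin n × Fin m,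
        |h₁.eigenvalues p.1 * h₂.eigenvalues p.2| *
          Real.log |h₁.eigenvalues p.1 * h₂.eigenvalues p.2|) =
        ((Finset.univ.val.map (fun p : Fin n × Fin m =>
          h₁.eigenvalues p.1 * h₂.eigenvalues p.2)).map
          (fun x : ℝ => |x| * Real.log |x|)).sum := by
      rw [Multiset.map_map]
      rfl
    rw [h1, h2, hmult]
  rw [hsum]
  have expand : (∑ p : Fin n × Fin m,
      |h₁.eigenvalues p.1 * h₂.eigenvalues p.2| *
        Real.log |h₁.eigenvalues p.1 * h₂.eigenvalues p.2|) =
      (∑ i, |h₁.eigenvalues i|) * (∑ j, |h₂.eigenvalues j| * Real.log |h₂.eigenvalues j|)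
      + (∑ j, |h₂.eigenvalues j|) * (∑ i, |h₁.eigenvalues i| * Real.log |h₁.eigenvalues i|) := by
    rw [Fintype.sum_prod_type]
    simp_rw [abs_mul_log_abs_mul, Finset.sum_add_distrib, ← Finset.mul_sum,
      ← Finset.sum_mul]
    congr 1
    rw [Finset.mul_sum]

  rw [expand]
  ring
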